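/- Let d ≥ 1, γ ∈ (1,2), δ ∈ (γ−1, 1), L ≥ 0, and let A ⊆ ℝ^d be open and convex. Suppose f : A → ℝ is differentiable with |∇f(u) − ∇f(v)| ≤ L|u−v|^{γ−1} for all u, v ∈ A. Then for all x, y, z ∈ ℝ^d with x ≠ y, z ≠ 0, and x, y, x+z, y+z ∈ A, |f(x+z) − f(x) − f(y+z) + f(y)| ≤ 2L |z|^{γ−δ} |x−y|^δ. -/

import Mathlib

open Set

lemma key_seconddiff {d : ℕ} {A : Set (EuclideanSpace ℝ (Fin d))} (hAconv : Convex ℝ A)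
    {f : EuclideanSpace ℝ (Fin d) → ℝ}
    (hfdiff : ∀ u ∈ A, DifferentiableAt ℝ f u) {C : ℝ}
    (x y z : EuclideanSpace ℝ (Fin d))
    (hx : x ∈ A) (hy : y ∈ A) (hxz : x + z ∈ A) (hyz : y + z ∈ A)
    (hb : ∀ u ∈ A, u + z ∈ A → ‖fderiv ℝ f (u + z) - fderiv ℝ f u‖ ≤ C) :
    |f (x + z) - f x - (f (y + z) - f y)| ≤ C * ‖x - y‖ := by
  set s : Set (EuclideanSpace ℝ (Fin d)) := segment ℝ x y with hs
  have hsA : s ⊆ A := hAconv.segment_subset hx hy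
  have hszA : ∀ u ∈ s, u + z ∈ A := by
    intro u hu
    have : z + u ∈ segment ℝ (z + x) (z + y) := (mem_segment_translate ℝ z).mpr hu
    have := hAconv.segment_subset (by rwa [add_comm]) (by rwa [add_comm]) this
    rwa [add_comm] at this
  have hderiv : ∀ u ∈ s, HasFDerivWithinAt (fun u => f (u + z) - f u)
      (fderiv ℝ f (u + z) - fderiv ℝ f u) s u := by
    intro u hu
    have h1 : HasFDerivAt (fun u => f (u + z)) (fderiv ℝ f (u + z)) u := by
      have := ((hfdiff (u + z) (hszA u hu)).hasFDerivAt).comp u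
        ((hasFDerivAt_id u).add_const z)
      simpa [Function.comp_def] using this
    exact ((h1.sub (hfdiff u (hsA hu)).hasFDerivAt)).hasFDerivWithinAt
  have hbound : ∀ u ∈ s, ‖fderiv ℝ f (u + z) - fderiv ℝ f u‖ ≤ C := fun u hu =>
    hb u (hsA hu) (hszA u hu)
  have hconv : Convex ℝ s := convex_segment x y
  have := hconv.norm_image_sub_le_of_norm_hasFDerivWithin_le hderiv hbound
    (right_mem_segment ℝ x y) (left_mem_segment ℝ x y)
  calc |f (x + z) - f x - (f (y + z) - f y)|
      = ‖(f (x + z) - f x) - (f (y + z) - f y)‖ := (Real.norm_eq_abs _).symm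
    _ ≤ C * ‖x - y‖ := this

theorem stmt15 (d : ℕ) (hd : 1 ≤ d) (γ δ L : ℝ) (hγ1 : 1 < γ) (hγ2 : γ < 2)
    (hδ1 : γ - 1 < δ) (hδ2 : δ < 1) (hL : 0 ≤ L)
    (A : Set (EuclideanSpace ℝ (Fin d))) (hAopen : IsOpen A) (hAconv : Convex ℝ A)
    (f : EuclideanSpace ℝ (Fin d) → ℝ)
    (hfdiff : ∀ u ∈ A, DifferentiableAt ℝ f u)
    (hf : ∀ u ∈ A, ∀ v ∈ A, ‖fderiv ℝ f u - fderiv ℝ f v‖ ≤ L * ‖u - v‖ ^ (γ - 1)) :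
    ∀ x y z : EuclideanSpace ℝ (Fin d), x ≠ y → z ≠ 0 →
      x ∈ A → y ∈ A → x + z ∈ A → y + z ∈ A →
      |f (x + z) - f x - f (y + z) + f y| ≤
        2 * L * ‖z‖ ^ (γ - δ) * ‖x - y‖ ^ δ := by
  intro x y z hxy hz hx hy hxz hyz
  have hznorm : (0:ℝ) < ‖z‖ := norm_pos_iff.mpr hz
  have hxynorm : (0:ℝ) < ‖x - y‖ := by
    rw [norm_pos_iff]; exact sub_ne_zero.mpr hxy
  -- bound 1 : |Δ| ≤ L * ‖z‖^(γ-1) * ‖x-y‖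
  have hb1 : |f (x + z) - f x - (f (y + z) - f y)| ≤ (L * ‖z‖ ^ (γ - 1)) * ‖x - y‖ := by
    apply key_seconddiff hAconv hfdiff x y z hx hy hxz hyz
    intro u hu huz
    have := hf (u + z) huz u hu
    simpa using this
  -- bound 2 : |Δ| ≤ L * ‖x-y‖^(γ-1) * ‖z‖
  have hb2 : |f (x + z) - f x - (f (y + z) - f y)| ≤ (L * ‖x - y‖ ^ (γ - 1)) * ‖z‖ := by
    have hy' : x + (y - x) ∈ A := by simpa using hy
    have hyz' : (x + z) + (y - x) ∈ A := by
      have : (x + z) + (y - x) = y + z := by abel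
      rw [this]; exact hyz
    have hb : ∀ u ∈ A, u + (y - x) ∈ A →
        ‖fderiv ℝ f (u + (y - x)) - fderiv ℝ f u‖ ≤ L * ‖x - y‖ ^ (γ - 1) := by
      intro u hu huw
      have := hf (u + (y - x)) huw u hu
      have h2 : ‖u + (y - x) - u‖ = ‖x - y‖ := by
        rw [show u + (y - x) - u = y - x by abel, ← neg_sub x y, norm_neg]
      rwa [h2] at this
    have := key_seconddiff hAconv hfdiff x (x + z) (y - x) hx hxz hy' hyz' hb
    have hq : f (x + (y - x)) - f x - (f (x + z + (y - x)) - f (x + z))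
        = f (x + z) - f x - (f (y + z) - f y) := by
      rw [show x + (y - x) = y by abel, show x + z + (y - x) = y + z by abel]; ring
    rw [hq] at this
    have hn : ‖x - (x + z)‖ = ‖z‖ := by
      rw [show x - (x + z) = -z by abel, norm_neg]
    rwa [hn] at this
  have hgoal : |f (x + z) - f x - (f (y + z) - f y)|
      ≤ L * ‖z‖ ^ (γ - δ) * ‖x - y‖ ^ δ := by
    rcases le_total ‖z‖ ‖x - y‖ with h | h
    · -- use hb2: L * ‖x-y‖^(γ-1) * ‖z‖ ≤ L * ‖z‖^(γ-δ) * ‖x-y‖^δ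
      refine hb2.trans ?_
      have key : ‖x - y‖ ^ (γ - 1) * ‖z‖ ≤ ‖z‖ ^ (γ - δ) * ‖x - y‖ ^ δ := by
        have hz1 : ‖z‖ = ‖z‖ ^ (1 + δ - γ) * ‖z‖ ^ (γ - δ) := by
          rw [← Real.rpow_add hznorm, show (1 + δ - γ) + (γ - δ) = 1 by ring,
            Real.rpow_one]
        have hmono : ‖z‖ ^ (1 + δ - γ) ≤ ‖x - y‖ ^ (1 + δ - γ) :=
          Real.rpow_le_rpow hznorm.le h (by linarith)
        have comb : ‖x - y‖ ^ (γ - 1) * ‖x - y‖ ^ (1 + δ - γ) = ‖x - y‖ ^ δ := by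
          rw [← Real.rpow_add hxynorm]; congr 1; ring
        calc ‖x - y‖ ^ (γ - 1) * ‖z‖
            = ‖z‖ ^ (γ - δ) * (‖x - y‖ ^ (γ - 1) * ‖z‖ ^ (1 + δ - γ)) := by
              conv_lhs => rw [hz1]
              ring
          _ ≤ ‖z‖ ^ (γ - δ) * (‖x - y‖ ^ (γ - 1) * ‖x - y‖ ^ (1 + δ - γ)) := by
              apply mul_le_mul_of_nonneg_left _ (Real.rpow_nonneg hznorm.le _)
              exact mul_le_mul_of_nonneg_left hmono (Real.rpow_nonneg hxynorm.le _)
          _ = ‖z‖ ^ (γ - δ) * ‖x - y‖ ^ δ := by rw [comb]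
      calc L * ‖x - y‖ ^ (γ - 1) * ‖z‖ = L * (‖x - y‖ ^ (γ - 1) * ‖z‖) := by ring
        _ ≤ L * (‖z‖ ^ (γ - δ) * ‖x - y‖ ^ δ) := mul_le_mul_of_nonneg_left key hL
        _ = L * ‖z‖ ^ (γ - δ) * ‖x - y‖ ^ δ := by ring
    · refine hb1.trans ?_
      have key : ‖z‖ ^ (γ - 1) * ‖x - y‖ ≤ ‖z‖ ^ (γ - δ) * ‖x - y‖ ^ δ := by
        have hz1 : ‖x - y‖ = ‖x - y‖ ^ (1 - δ) * ‖x - y‖ ^ δ := by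
          rw [← Real.rpow_add hxynorm, show (1 - δ) + δ = 1 by ring, Real.rpow_one]
        have hmono : ‖x - y‖ ^ (1 - δ) ≤ ‖z‖ ^ (1 - δ) :=
          Real.rpow_le_rpow hxynorm.le h (by linarith)
        have comb : ‖z‖ ^ (γ - 1) * ‖z‖ ^ (1 - δ) = ‖z‖ ^ (γ - δ) := by
          rw [← Real.rpow_add hznorm]; congr 1; ring
        calc ‖z‖ ^ (γ - 1) * ‖x - y‖
            = ‖x - y‖ ^ δ * (‖z‖ ^ (γ - 1) * ‖x - y‖ ^ (1 - δ)) := by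
              conv_lhs => rw [hz1]
              ring
          _ ≤ ‖x - y‖ ^ δ * (‖z‖ ^ (γ - 1) * ‖z‖ ^ (1 - δ)) := by
              apply mul_le_mul_of_nonneg_left _ (Real.rpow_nonneg hxynorm.le _)
              exact mul_le_mul_of_nonneg_left hmono (Real.rpow_nonneg hznorm.le _)
          _ = ‖z‖ ^ (γ - δ) * ‖x - y‖ ^ δ := by rw [comb]; ring
      calc L * ‖z‖ ^ (γ - 1) * ‖x - y‖ = L * (‖z‖ ^ (γ - 1) * ‖x - y‖) := by ring
        _ ≤ L * (‖z‖ ^ (γ - δ) * ‖x - y‖ ^ δ) := mul_le_mul_of_nonneg_left key hL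
        _ = L * ‖z‖ ^ (γ - δ) * ‖x - y‖ ^ δ := by ring
  have habs : f (x + z) - f x - f (y + z) + f y = f (x + z) - f x - (f (y + z) - f y) := by ring
  rw [habs]
  refine hgoal.trans ?_
  have : 0 ≤ L * ‖z‖ ^ (γ - δ) * ‖x - y‖ ^ δ := by positivity
  linarith
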